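/- arXiv:1705.08654 — 5 statements merged into one kernel-verified Lean document; each statement's English description precedes it below -/
import Mathlib

section
/- Let {q_1,…,q_m} be finitely supported real filters on ℤ, and define W = [S_{q_1[-·]}^T, …, S_{q_m[-·]}^T]^T and W^T = [S_{q_1},…,S_{q_m}], where S_q is convolution with q. Then W^T W = I on ℓ²(ℤ) if and only if the filters satisfy the unitary extension principle condition Σ_{l=1}^m Σ_{k∈ℤ} q_l[n+k] q_l[k] = δ_n for all n ∈ ℤ. -/
/-- For finitely supported filters q₁,…,q_m on ℤ, the perfect reconstruction
property W^T W = I on ℓ²(ℤ) holds iff the unitary extension principle condition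
∑_l ∑_k q_l[n+k] q_l[k] = δ_n holds for all n. Here
(W u)_{l,k} = ∑_j q_l[j−k] u[j] (convolution with q_l[-·]) and
(W^T v)[n] = ∑_l ∑_k q_l[n−k] v_l[k]. -/
theorem uep_iff_perfect_reconstruction
    (m : ℕ) (q : Fin m → ℤ → ℝ)
    (hq : ∀ l, (Function.support (q l)).Finite) :
    (∀ u : ℤ → ℝ, Memℓp u 2 →
        ∀ n : ℤ,
          (∑ l : Fin m, ∑' k : ℤ, q l (n - k) * (∑' j : ℤ, q l (j - k) * u j)) = u n) ↔
      (∀ n : ℤ,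
        (∑ l : Fin m, ∑' k : ℤ, q l (n + k) * q l k) = if n = 0 then (1 : ℝ) else 0) := by
  classical
  constructor
  · intro h n
    set u : ℤ → ℝ := fun j => if j = 0 then (1 : ℝ) else 0 with hu_def
    have hu : Memℓp u 2 := by
      apply memℓp_gen
      apply summable_of_ne_finset_zero (s := ({0} : Finset ℤ))
      intro b hb
      simp only [Finset.mem_singleton] at hb
      simp [hu_def, hb]
    have key := h u hu n
    have inner : ∀ (l : Fin m) (k : ℤ), (∑' j : ℤ, q l (j - k) * u j) = q l (-k) := by
      intro l k
      rw [tsum_eq_single 0 (fun b hb => by simp [hu_def, hb])]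
      simp [hu_def]
    calc ∑ l : Fin m, ∑' k : ℤ, q l (n + k) * q l k
        = ∑ l : Fin m, ∑' k : ℤ, q l (n - k) * q l (-k) := by
          refine Finset.sum_congr rfl fun l _ => ?_
          rw [← (Equiv.neg ℤ).tsum_eq (fun k => q l (n + k) * q l k)]
          refine tsum_congr fun k => ?_
          simp [sub_eq_add_neg]
      _ = ∑ l : Fin m, ∑' k : ℤ, q l (n - k) * (∑' j : ℤ, q l (j - k) * u j) := by
          refine Finset.sum_congr rfl fun l _ => tsum_congr fun k => by rw [inner]
      _ = u n := key
      _ = if n = 0 then 1 else 0 := rfl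
  · intro h u _ n
    set S : Finset ℤ := Finset.univ.biUnion (fun l : Fin m => (hq l).toFinset) with hS
    set K : Finset ℤ := S.image (fun s => n - s) with hK
    set J : Finset ℤ := insert n (K.biUnion fun k => S.image (fun s => s + k)) with hJ
    have hmemS : ∀ (l : Fin m) (s : ℤ), q l s ≠ 0 → s ∈ S := by
      intro l s hs
      simp only [hS, Finset.mem_biUnion, Finset.mem_univ, Set.Finite.mem_toFinset,
        Function.mem_support, true_and]
      exact ⟨l, hs⟩
    have hK0 : ∀ (l : Fin m) (k : ℤ), k ∉ K → q l (n - k) = 0 := by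
      intro l k hk
      by_contra h0
      apply hk
      simp only [hK, Finset.mem_image]
      exact ⟨n - k, hmemS l _ h0, by ring⟩
    have hJ0 : ∀ (l : Fin m) (k : ℤ), k ∈ K → ∀ j, j ∉ J → q l (j - k) = 0 := by
      intro l k hk j hj
      by_contra h0
      apply hj
      simp only [hJ, Finset.mem_insert, Finset.mem_biUnion, Finset.mem_image]
      exact Or.inr ⟨k, hk, j - k, hmemS l _ h0, by ring⟩
    have hKsum : ∀ (l : Fin m) (j : ℤ),
        (∑ k ∈ K, q l (n - k) * q l (j - k)) = ∑' k : ℤ, q l (n - k) * q l (j - k) := by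
      intro l j
      exact (tsum_eq_sum (fun k hk => by rw [hK0 l k hk, zero_mul])).symm
    calc ∑ l : Fin m, ∑' k : ℤ, q l (n - k) * (∑' j : ℤ, q l (j - k) * u j)
        = ∑ l : Fin m, ∑ k ∈ K, q l (n - k) * (∑ j ∈ J, q l (j - k) * u j) := by
          refine Finset.sum_congr rfl fun l _ => ?_
          rw [tsum_eq_sum (s := K) (fun k hk => by rw [hK0 l k hk, zero_mul])]
          refine Finset.sum_congr rfl fun k hk => ?_
          rw [tsum_eq_sum (s := J) (fun j hj => by rw [hJ0 l k hk j hj, zero_mul])]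
      _ = ∑ l : Fin m, ∑ k ∈ K, ∑ j ∈ J, q l (n - k) * q l (j - k) * u j := by
          simp_rw [Finset.mul_sum, mul_assoc]
      _ = ∑ l : Fin m, ∑ j ∈ J, ∑ k ∈ K, q l (n - k) * q l (j - k) * u j := by
          exact Finset.sum_congr rfl fun l _ => Finset.sum_comm
      _ = ∑ j ∈ J, ∑ l : Fin m, ∑ k ∈ K, q l (n - k) * q l (j - k) * u j :=
          Finset.sum_comm
      _ = ∑ j ∈ J, (∑ l : Fin m, ∑ k ∈ K, q l (n - k) * q l (j - k)) * u j := by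
          simp_rw [Finset.sum_mul]
      _ = ∑ j ∈ J, (if n - j = 0 then (1 : ℝ) else 0) * u j := by
          refine Finset.sum_congr rfl fun j _ => ?_
          congr 1
          rw [← h (n - j)]
          refine Finset.sum_congr rfl fun l _ => ?_
          rw [hKsum l j, ← (Equiv.subLeft j).tsum_eq (fun k => q l ((n - j) + k) * q l k)]
          refine tsum_congr fun k => ?_
          have h1 : n - j + (Equiv.subLeft j) k = n - k := by
            simp [Equiv.subLeft]
          have h2 : ((Equiv.subLeft j) k : ℤ) = j - k := by simp [Equiv.subLeft]
          rw [h1, h2]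
      _ = ∑ j ∈ J, (if j = n then u j else 0) := by
          refine Finset.sum_congr rfl fun j _ => ?_
          by_cases hj : j = n
          · simp [hj]
          · have : n - j ≠ 0 := fun hc => hj (by omega)
            simp [hj, this]
      _ = u n := by
          rw [Finset.sum_ite_eq' J n u]
          simp [hJ]
end

section
/- If each filter q_l is finitely supported and the family {q_1,…,q_m} satisfies Σ_{l=1}^m Σ_k q_l[n+k] q_l[k] = δ_n, then the analysis operator W built from these filters is an isometry on ℓ²(ℤ): ‖Wu‖² = ‖u‖² for all u ∈ ℓ²(ℤ). -/
section Aux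

variable {u : ℤ → ℝ}

private lemma summable_sq_shift (hu : Summable fun k : ℤ => u k ^ 2) (s : ℤ) :
    Summable fun k : ℤ => u (s + k) ^ 2 :=
  ((Equiv.addLeft s).summable_iff (f := fun k : ℤ => u k ^ 2)).2 hu

private lemma summable_mul_shift (hu : Summable fun k : ℤ => u k ^ 2) (s t : ℤ) :
    Summable fun k : ℤ => u (s + k) * u (t + k) := by
  have habs : Summable fun k : ℤ => |u (s + k) * u (t + k)| := by
    refine Summable.of_nonneg_of_le (fun k => abs_nonneg _) (fun k => ?_)
      (((summable_sq_shift hu s).add (summable_sq_shift hu t)).div_const 2)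
    have h1 : |u (s + k) * u (t + k)| = |u (s + k)| * |u (t + k)| := abs_mul _ _
    nlinarith [sq_nonneg (|u (s + k)| - |u (t + k)|), sq_abs (u (s + k)), sq_abs (u (t + k)),
      abs_nonneg (u (s + k)), abs_nonneg (u (t + k))]
  exact habs.of_abs

end Aux

/-- If the finitely supported filters q₁,…,q_m satisfy the UEP condition
∑_l ∑_k q_l[n+k] q_l[k] = δ_n, then the analysis operator W is an isometry on ℓ²(ℤ):
‖Wu‖² = ‖u‖², i.e. ∑_l ∑_k ((S_{q_l[-·]} u)[k])² = ∑_n (u[n])². -/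
theorem uep_implies_analysis_isometry
    (m : ℕ) (q : Fin m → ℤ → ℝ)
    (hq : ∀ l, (Function.support (q l)).Finite)
    (huep : ∀ n : ℤ,
      (∑ l : Fin m, ∑' k : ℤ, q l (n + k) * q l k) = if n = 0 then (1 : ℝ) else 0) :
    ∀ u : ℤ → ℝ, Memℓp u 2 →
      (∑ l : Fin m, ∑' k : ℤ, (∑' j : ℤ, q l (j - k) * u j) ^ 2) = ∑' n : ℤ, (u n) ^ 2 := by
  intro u hu
  -- u is square-summable
  have husq : Summable fun k : ℤ => u k ^ 2 := by
    have := hu.summable (p := 2) (by norm_num)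
    simpa [Real.rpow_natCast, sq_abs] using this
  classical
  set S : Fin m → Finset ℤ := fun l => (hq l).toFinset with hS
  have hSmem : ∀ l n, n ∈ S l ↔ q l n ≠ 0 := by
    intro l n; simp [hS, Function.mem_support]
  have hSzero : ∀ l n, n ∉ S l → q l n = 0 := by
    intro l n hn; by_contra h; exact hn ((hSmem l n).2 h)
  -- the autocorrelation of u
  set C : ℤ → ℝ := fun n => ∑' k : ℤ, u (n + k) * u k with hC
  -- Step A: inner tsum is a finite sum
  have stepA : ∀ l k, (∑' j : ℤ, q l (j - k) * u j) = ∑ s ∈ S l, q l s * u (s + k) := by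
    intro l k
    have h1 : (∑' j : ℤ, q l (j - k) * u j) = ∑' s : ℤ, q l s * u (s + k) := by
      rw [← (Equiv.addRight k).tsum_eq (fun j => q l (j - k) * u j)]
      exact tsum_congr fun s => by simp
    rw [h1]
    exact tsum_eq_sum fun s hs => by rw [hSzero l s hs, zero_mul]
  -- Step D: shifted correlations
  have stepD : ∀ s t : ℤ, (∑' k : ℤ, u (s + k) * u (t + k)) = C (s - t) := by
    intro s t
    simp only [hC]
    rw [← (Equiv.addLeft t).tsum_eq (fun k => u (s - t + k) * u k)]
    refine tsum_congr fun k => ?_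
    simp only [Equiv.coe_addLeft]
    congr 1
    congr 1
    ring
  -- For each l, compute the tsum over k
  have stepL : ∀ l : Fin m,
      (∑' k : ℤ, (∑' j : ℤ, q l (j - k) * u j) ^ 2)
        = ∑ s ∈ S l, ∑ t ∈ S l, q l s * q l t * C (s - t) := by
    intro l
    have h1 : ∀ k : ℤ, (∑' j : ℤ, q l (j - k) * u j) ^ 2
        = ∑ s ∈ S l, ∑ t ∈ S l, q l s * q l t * (u (s + k) * u (t + k)) := by
      intro k
      rw [stepA l k, sq, Finset.sum_mul_sum]
      exact Finset.sum_congr rfl fun s _ => Finset.sum_congr rfl fun t _ => by ring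
    calc (∑' k : ℤ, (∑' j : ℤ, q l (j - k) * u j) ^ 2)
        = ∑' k : ℤ, ∑ s ∈ S l, ∑ t ∈ S l, q l s * q l t * (u (s + k) * u (t + k)) :=
          tsum_congr h1
      _ = ∑ s ∈ S l, ∑' k : ℤ, ∑ t ∈ S l, q l s * q l t * (u (s + k) * u (t + k)) := by
          refine Summable.tsum_finsetSum fun s _ => summable_sum fun t _ => ?_
          exact (summable_mul_shift husq s t).mul_left _
      _ = ∑ s ∈ S l, ∑ t ∈ S l, ∑' k : ℤ, q l s * q l t * (u (s + k) * u (t + k)) :=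
          Finset.sum_congr rfl fun s _ =>
            Summable.tsum_finsetSum fun t _ => (summable_mul_shift husq s t).mul_left _
      _ = ∑ s ∈ S l, ∑ t ∈ S l, q l s * q l t * C (s - t) := by
          refine Finset.sum_congr rfl fun s _ => Finset.sum_congr rfl fun t _ => ?_
          rw [(summable_mul_shift husq s t).tsum_mul_left, stepD s t]
  -- rewrite the double finset sum as a tsum over n
  have stepR : ∀ l : Fin m,
      (∑ s ∈ S l, ∑ t ∈ S l, q l s * q l t * C (s - t))
        = ∑' n : ℤ, ∑ t ∈ S l, q l (n + t) * q l t * C n := by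
    intro l
    rw [Finset.sum_comm]
    have h1 : ∀ t ∈ S l, (∑ s ∈ S l, q l s * q l t * C (s - t))
        = ∑' n : ℤ, q l (n + t) * q l t * C n := by
      intro t _
      have h2 : (∑' s : ℤ, q l s * q l t * C (s - t)) = ∑ s ∈ S l, q l s * q l t * C (s - t) :=
        tsum_eq_sum fun s hs => by rw [hSzero l s hs]; ring
      rw [← h2, ← (Equiv.addRight t).tsum_eq (fun s => q l s * q l t * C (s - t))]
      exact tsum_congr fun n => by simp
    rw [Finset.sum_congr rfl h1]
    refine (Summable.tsum_finsetSum fun t _ => ?_).symm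
    refine summable_of_ne_finset_zero (s := (S l).image (fun x => x - t)) fun n hn => ?_
    have : q l (n + t) = 0 := by
      by_contra h
      exact hn (Finset.mem_image.2 ⟨n + t, (hSmem l _).2 h, by ring⟩)
    rw [this]; ring
  -- inner sum in the UEP hypothesis as a finite sum
  have hueps : ∀ l (n : ℤ), (∑' k : ℤ, q l (n + k) * q l k) = ∑ t ∈ S l, q l (n + t) * q l t :=
    fun l n => tsum_eq_sum fun t ht => by rw [hSzero l t ht, mul_zero]
  -- summability of each l-term in n
  have hsummN : ∀ l : Fin m, Summable fun n : ℤ => ∑ t ∈ S l, q l (n + t) * q l t * C n := by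
    intro l
    refine summable_of_ne_finset_zero
      (s := ((S l) ×ˢ (S l)).image (fun p : ℤ × ℤ => p.1 - p.2)) fun n hn => ?_
    refine Finset.sum_eq_zero fun t ht => ?_
    have : q l (n + t) = 0 := by
      by_contra h
      exact hn (Finset.mem_image.2 ⟨(n + t, t), Finset.mem_product.2 ⟨(hSmem l _).2 h, ht⟩,
        by simp⟩)
    rw [this]; ring
  calc (∑ l : Fin m, ∑' k : ℤ, (∑' j : ℤ, q l (j - k) * u j) ^ 2)
      = ∑ l : Fin m, ∑' n : ℤ, ∑ t ∈ S l, q l (n + t) * q l t * C n := by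
        exact Finset.sum_congr rfl fun l _ => by rw [stepL l, stepR l]
    _ = ∑' n : ℤ, ∑ l : Fin m, ∑ t ∈ S l, q l (n + t) * q l t * C n :=
        (Summable.tsum_finsetSum fun l _ => hsummN l).symm
    _ = ∑' n : ℤ, (if n = 0 then (1 : ℝ) else 0) * C n := by
        refine tsum_congr fun n => ?_
        rw [← huep n]
        rw [Finset.sum_mul]
        refine Finset.sum_congr rfl fun l _ => ?_
        rw [hueps l n, Finset.sum_mul]
    _ = C 0 := by
        rw [tsum_eq_single 0 (fun n hn => by rw [if_neg hn, zero_mul])]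
        simp
    _ = ∑' n : ℤ, (u n) ^ 2 := by
        simp only [hC]
        exact tsum_congr fun k => by simp [sq]
end

section
/- The minimizer over matrices D with D D^T = I of ‖D^T G − V‖_F² + (β/μ)‖D − D₀‖_F² (scaled by μ/2 and β/2 respectively) is D* = X Y^T, where X Σ Y^T is a singular value decomposition of G V^T + (β/μ) D₀, provided G V^T + (β/μ) D₀ has full rank. -/
open Matrix

/-- Squared Frobenius norm of a matrix. -/
def frobSq {n p : ℕ} (A : Matrix (Fin n) (Fin p) ℝ) : ℝ :=
  ∑ i, ∑ j, (A i j) ^ 2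

lemma frobSq_eq_trace {n p : ℕ} (A : Matrix (Fin n) (Fin p) ℝ) :
    frobSq A = Matrix.trace (A * Aᵀ) := by
  simp [frobSq, Matrix.trace, Matrix.mul_apply, Matrix.diag, sq]

lemma frobSq_sub {n p : ℕ} (A B : Matrix (Fin n) (Fin p) ℝ) :
    frobSq (A - B) = frobSq A + frobSq B - 2 * Matrix.trace (A * Bᵀ) := by
  have h : Matrix.trace (B * Aᵀ) = Matrix.trace (A * Bᵀ) := by
    rw [← Matrix.trace_transpose (A * Bᵀ), Matrix.transpose_mul, Matrix.transpose_transpose]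
  simp only [frobSq_eq_trace, Matrix.sub_mul, Matrix.mul_sub, Matrix.transpose_sub,
    Matrix.trace_sub]
  rw [h]; ring

lemma diag_le_one {n : ℕ} (Q : Matrix (Fin n) (Fin n) ℝ) (hQ : Q * Qᵀ = 1) (i : Fin n) :
    Q i i ≤ 1 := by
  have h1 : (∑ j, Q i j * Q i j) = 1 := by
    have := congrFun (congrFun hQ i) i
    simpa [Matrix.mul_apply, Matrix.one_apply] using this
  have h2 : (Q i i) ^ 2 ≤ ∑ j, Q i j * Q i j := by
    have := Finset.single_le_sum (f := fun j => Q i j * Q i j)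
      (fun j _ => mul_self_nonneg _) (Finset.mem_univ i)
    simpa [sq] using this
  nlinarith

lemma trace_mul_diag_le {n : ℕ} (Q : Matrix (Fin n) (Fin n) ℝ) (σ : Fin n → ℝ)
    (hσ : ∀ i, 0 ≤ σ i) (hQ : Q * Qᵀ = 1) :
    Matrix.trace (Q * Matrix.diagonal σ) ≤ ∑ i, σ i := by
  rw [Matrix.trace]
  have hd : ∀ i : Fin n, (Q * Matrix.diagonal σ).diag i = Q i i * σ i := by
    intro i; simp [Matrix.diag, Matrix.mul_diagonal]
  rw [Finset.sum_congr rfl (fun i _ => hd i)]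
  exact Finset.sum_le_sum fun i _ => by
    have := diag_le_one Q hQ i
    nlinarith [hσ i]

/-- The objective as constant minus μ·tr(Dᵀ M). -/
lemma objective_linear {r p : ℕ} (G V : Matrix (Fin r) (Fin p) ℝ)
    (D₀ : Matrix (Fin r) (Fin r) ℝ) (μ β : ℝ) (hμ : 0 < μ)
    (D : Matrix (Fin r) (Fin r) ℝ) (hD : D * Dᵀ = 1) :
    μ / 2 * frobSq (Dᵀ * G - V) + β / 2 * frobSq (D - D₀) =
      (μ / 2 * (Matrix.trace (G * Gᵀ) + Matrix.trace (V * Vᵀ)) +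
        β / 2 * (Matrix.trace (1 : Matrix (Fin r) (Fin r) ℝ) + Matrix.trace (D₀ * D₀ᵀ))) -
      μ * Matrix.trace (Dᵀ * (G * Vᵀ + (β / μ) • D₀)) := by
  have hDt : Dᵀ * D = 1 := mul_eq_one_comm.mp hD
  have e1 : frobSq (Dᵀ * G) = Matrix.trace (G * Gᵀ) := by
    rw [frobSq_eq_trace, Matrix.transpose_mul, Matrix.transpose_transpose,
      ← Matrix.mul_assoc, Matrix.mul_assoc Dᵀ G Gᵀ, Matrix.trace_mul_comm,
      ← Matrix.mul_assoc, hD, Matrix.one_mul]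
  have e2 : Matrix.trace ((Dᵀ * G) * Vᵀ) = Matrix.trace (Dᵀ * (G * Vᵀ)) := by
    rw [Matrix.mul_assoc]
  have e3 : frobSq D = Matrix.trace (1 : Matrix (Fin r) (Fin r) ℝ) := by
    rw [frobSq_eq_trace, hD]
  have e4 : Matrix.trace (D * D₀ᵀ) = Matrix.trace (Dᵀ * D₀) := by
    rw [Matrix.trace_mul_comm, ← Matrix.trace_transpose (Dᵀ * D₀), Matrix.transpose_mul,
      Matrix.transpose_transpose]
  have e5 : Matrix.trace (Dᵀ * (G * Vᵀ + (β / μ) • D₀)) =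
      Matrix.trace (Dᵀ * (G * Vᵀ)) + (β / μ) * Matrix.trace (Dᵀ * D₀) := by
    rw [Matrix.mul_add, Matrix.trace_add, Matrix.mul_smul, Matrix.trace_smul, smul_eq_mul]
  rw [frobSq_sub, frobSq_sub, e1, e2, e3, e4, e5, frobSq_eq_trace V, frobSq_eq_trace D₀]
  field_simp
  ring

/-- The minimizer over orthogonal D (D Dᵀ = I) of
(μ/2)‖Dᵀ G − V‖_F² + (β/2)‖D − D₀‖_F² is D* = X Yᵀ, where X Σ Yᵀ is an SVD of
M = G Vᵀ + (β/μ) D₀, provided M has full rank. -/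
theorem svd_gives_orthogonal_procrustes_minimizer
    {r p : ℕ} (G V : Matrix (Fin r) (Fin p) ℝ) (D₀ : Matrix (Fin r) (Fin r) ℝ)
    (μ β : ℝ) (hμ : 0 < μ) (hβ : 0 < β)
    (X Y : Matrix (Fin r) (Fin r) ℝ) (σ : Fin r → ℝ)
    (hX : X * Xᵀ = 1) (hY : Y * Yᵀ = 1) (hσ : ∀ i, 0 ≤ σ i)
    (hSVD : G * Vᵀ + (β / μ) • D₀ = X * Matrix.diagonal σ * Yᵀ)
    (hrank : (G * Vᵀ + (β / μ) • D₀).det ≠ 0) :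
    (X * Yᵀ) * (X * Yᵀ)ᵀ = 1 ∧
      ∀ D : Matrix (Fin r) (Fin r) ℝ, D * Dᵀ = 1 →
        μ / 2 * frobSq ((X * Yᵀ)ᵀ * G - V) + β / 2 * frobSq (X * Yᵀ - D₀) ≤
          μ / 2 * frobSq (Dᵀ * G - V) + β / 2 * frobSq (D - D₀) := by
  have hXt : Xᵀ * X = 1 := mul_eq_one_comm.mp hX
  have hYt : Yᵀ * Y = 1 := mul_eq_one_comm.mp hY
  have hOrth : (X * Yᵀ) * (X * Yᵀ)ᵀ = 1 := by
    rw [Matrix.transpose_mul, Matrix.transpose_transpose, Matrix.mul_assoc,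
      ← Matrix.mul_assoc Yᵀ Y Xᵀ, hYt, Matrix.one_mul, hX]
  refine ⟨hOrth, fun D hD => ?_⟩
  rw [objective_linear G V D₀ μ β hμ (X * Yᵀ) hOrth, objective_linear G V D₀ μ β hμ D hD]
  have key : Matrix.trace (Dᵀ * (G * Vᵀ + (β / μ) • D₀)) ≤
      Matrix.trace ((X * Yᵀ)ᵀ * (G * Vᵀ + (β / μ) • D₀)) := by
    rw [hSVD]
    have hDt : Dᵀ * D = 1 := mul_eq_one_comm.mp hD
    -- RHS value is ∑ σ i
    have hR : Matrix.trace ((X * Yᵀ)ᵀ * (X * Matrix.diagonal σ * Yᵀ)) = ∑ i, σ i := by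
      rw [Matrix.transpose_mul, Matrix.transpose_transpose]
      have : (Y * Xᵀ) * (X * Matrix.diagonal σ * Yᵀ) = Y * Matrix.diagonal σ * Yᵀ := by
        simp only [Matrix.mul_assoc]
        rw [← Matrix.mul_assoc Xᵀ X _, hXt, Matrix.one_mul]
      rw [this, Matrix.trace_mul_comm, ← Matrix.mul_assoc, hYt, Matrix.one_mul,
        Matrix.trace_diagonal]
    rw [hR]
    -- LHS ≤ ∑ σ i
    have hQ : (Yᵀ * Dᵀ * X) * (Yᵀ * Dᵀ * X)ᵀ = 1 := by
      have : (Yᵀ * Dᵀ * X) * (Yᵀ * Dᵀ * X)ᵀ = Yᵀ * Dᵀ * (X * Xᵀ) * D * Y := by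
        simp [Matrix.transpose_mul, Matrix.transpose_transpose, Matrix.mul_assoc]
      rw [this, hX, Matrix.mul_one, Matrix.mul_assoc Yᵀ Dᵀ D, hDt, Matrix.mul_one, hYt]
    have := trace_mul_diag_le (Yᵀ * Dᵀ * X) σ hσ hQ
    calc Matrix.trace (Dᵀ * (X * Matrix.diagonal σ * Yᵀ))
        = Matrix.trace ((Yᵀ * Dᵀ * X) * Matrix.diagonal σ) := by
          rw [← Matrix.mul_assoc, ← Matrix.mul_assoc, Matrix.trace_mul_comm,
            ← Matrix.mul_assoc, ← Matrix.mul_assoc]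
      _ ≤ ∑ i, σ i := this
  have hμ' : 0 ≤ μ := le_of_lt hμ
  nlinarith [key]
end

section
/- In the proximal alternating minimization algorithm for the joint-sparsity data-driven tight frame model, the frame coefficient iterates remain bounded: if u₁ᵏ ∈ [0,a₁]^N, u₂ᵏ ∈ [0,a₂]^N, and W₁ᵏ, W₂ᵏ satisfy (W_iᵏ)^T W_iᵏ = I for all k, and v^{k+1} is obtained by generalized hard thresholding of ((μ₁W₁^{k+1}u₁^{k+1}+γᵏv₁ᵏ)/(μ₁+γᵏ), (μ₂W₂^{k+1}u₂^{k+1}+γᵏv₂ᵏ)/(μ₂+γᵏ)) with γᵏ > 0, and initially ‖v₁⁰‖₂ ≤ ‖u₁⁰‖₂, ‖v₂⁰‖₂ ≤ ‖u₂⁰‖₂, then ‖v₁ᵏ‖₂ ≤ a₁√N and ‖v₂ᵏ‖₂ ≤ a₂√N for all k ≥ 0. -/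
open Matrix

/-- Euclidean norm of a finite vector. -/
noncomputable def vecEnorm {n : ℕ} (v : Fin n → ℝ) : ℝ :=
  Real.sqrt (∑ i, (v i) ^ 2)

lemma vecEnorm_eq_norm {n : ℕ} (v : Fin n → ℝ) :
    vecEnorm v = ‖(WithLp.equiv 2 (Fin n → ℝ)).symm v‖ := by
  rw [EuclideanSpace.norm_eq]
  simp [vecEnorm, sq_abs]

lemma vecEnorm_mono {n : ℕ} {v w : Fin n → ℝ} (h : ∀ i, (v i)^2 ≤ (w i)^2) :
    vecEnorm v ≤ vecEnorm w :=
  Real.sqrt_le_sqrt (Finset.sum_le_sum fun i _ => h i)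

lemma vecEnorm_le_of_le {n : ℕ} {v : Fin n → ℝ} {a : ℝ} (ha : 0 ≤ a)
    (h : ∀ i, (v i)^2 ≤ a^2) : vecEnorm v ≤ a * Real.sqrt n := by
  have : vecEnorm v ≤ Real.sqrt (∑ _i : Fin n, a^2) :=
    Real.sqrt_le_sqrt (Finset.sum_le_sum fun i _ => h i)
  calc vecEnorm v ≤ Real.sqrt (∑ _i : Fin n, a^2) := this
    _ = a * Real.sqrt n := by
        rw [Finset.sum_const, Finset.card_univ, Fintype.card_fin, nsmul_eq_mul,
          Real.sqrt_mul (by positivity), Real.sqrt_sq ha]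
        ring

lemma vecEnorm_mulVec {N M : ℕ} (W : Matrix (Fin M) (Fin N) ℝ) (h : Wᵀ * W = 1)
    (u : Fin N → ℝ) : vecEnorm (W *ᵥ u) = vecEnorm u := by
  unfold vecEnorm
  congr 1
  have h1 : (W *ᵥ u) ⬝ᵥ (W *ᵥ u) = u ⬝ᵥ u := by
    rw [dotProduct_mulVec, ← Matrix.mulVec_transpose, Matrix.mulVec_mulVec, h,
      Matrix.one_mulVec]
  simpa [dotProduct, sq] using h1

lemma step_bound {n : ℕ} (μ g C : ℝ) (hμ : 0 < μ) (hg : 0 < g) (hC : 0 ≤ C)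
    (x v v' : Fin n → ℝ)
    (h : ∀ j, v' j = (μ * x j + g * v j) / (μ + g) ∨ v' j = 0)
    (hx : vecEnorm x ≤ C) (hv : vecEnorm v ≤ C) : vecEnorm v' ≤ C := by
  set w : Fin n → ℝ := fun j => (μ * x j + g * v j) / (μ + g) with hw
  have h1 : vecEnorm v' ≤ vecEnorm w := by
    apply vecEnorm_mono
    intro i
    rcases h i with h' | h'
    · rw [h']
    · rw [h']; simpa using sq_nonneg (w i)
  have hμg : 0 < μ + g := by linarith
  have h2 : (WithLp.equiv 2 (Fin n → ℝ)).symm w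
      = (μ / (μ + g)) • (WithLp.equiv 2 (Fin n → ℝ)).symm x
        + (g / (μ + g)) • (WithLp.equiv 2 (Fin n → ℝ)).symm v := by
    ext j
    show (μ * x j + g * v j) / (μ + g) = μ / (μ + g) * x j + g / (μ + g) * v j
    field_simp
  have h3 : vecEnorm w ≤ μ / (μ + g) * C + g / (μ + g) * C := by
    rw [vecEnorm_eq_norm, h2]
    calc ‖_ + _‖ ≤ ‖(μ / (μ + g)) • (WithLp.equiv 2 (Fin n → ℝ)).symm x‖
          + ‖(g / (μ + g)) • (WithLp.equiv 2 (Fin n → ℝ)).symm v‖ := norm_add_le _ _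
      _ ≤ μ / (μ + g) * C + g / (μ + g) * C := by
          rw [norm_smul, norm_smul, Real.norm_eq_abs, Real.norm_eq_abs,
            abs_of_pos (show (0:ℝ) < μ / (μ + g) by positivity),
            abs_of_pos (show (0:ℝ) < g / (μ + g) by positivity)]
          apply add_le_add
          · exact mul_le_mul_of_nonneg_left (by rw [← vecEnorm_eq_norm]; exact hx) (by positivity)
          · exact mul_le_mul_of_nonneg_left (by rw [← vecEnorm_eq_norm]; exact hv) (by positivity)
  have : μ / (μ + g) * C + g / (μ + g) * C = C := by field_simp
  linarith

/-- Boundedness of the frame-coefficient iterates in the PAM algorithm for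
the joint-sparsity data-driven tight frame model: if the image iterates stay in the boxes
[0,a₁]^N, [0,a₂]^N, the frames satisfy Wᵀ W = I, and v^{k+1} results from generalized hard
thresholding of the weighted averages ((μᵢ Wᵢ^{k+1} uᵢ^{k+1} + γᵏ vᵢᵏ)/(μᵢ + γᵏ)), then
‖v₁ᵏ‖₂ ≤ a₁√N and ‖v₂ᵏ‖₂ ≤ a₂√N for all k. -/
theorem pam_coefficients_bounded
    {N M : ℕ} (a₁ a₂ μ₁ μ₂ : ℝ) (ha₁ : 0 < a₁) (ha₂ : 0 < a₂)
    (hμ₁ : 0 < μ₁) (hμ₂ : 0 < μ₂)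
    (L U : ℝ) (hLU : 0 < L ∧ L < U) (γ : ℕ → ℝ) (hγ : ∀ k, L ≤ γ k ∧ γ k ≤ U)
    (u₁ u₂ : ℕ → Fin N → ℝ) (W₁ W₂ : ℕ → Matrix (Fin M) (Fin N) ℝ)
    (v₁ v₂ : ℕ → Fin M → ℝ)
    (hu₁ : ∀ k i, 0 ≤ u₁ k i ∧ u₁ k i ≤ a₁)
    (hu₂ : ∀ k i, 0 ≤ u₂ k i ∧ u₂ k i ≤ a₂)
    (hW₁ : ∀ k, (W₁ k)ᵀ * W₁ k = 1) (hW₂ : ∀ k, (W₂ k)ᵀ * W₂ k = 1)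
    (hthresh : ∀ k, ∀ j : Fin M,
      (v₁ (k + 1) j = (μ₁ * (W₁ (k + 1) *ᵥ u₁ (k + 1)) j + γ k * v₁ k j) / (μ₁ + γ k) ∧
        v₂ (k + 1) j = (μ₂ * (W₂ (k + 1) *ᵥ u₂ (k + 1)) j + γ k * v₂ k j) / (μ₂ + γ k)) ∨
      (v₁ (k + 1) j = 0 ∧ v₂ (k + 1) j = 0))
    (hinit₁ : vecEnorm (v₁ 0) ≤ vecEnorm (u₁ 0)) (hinit₂ : vecEnorm (v₂ 0) ≤ vecEnorm (u₂ 0)) :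
    ∀ k : ℕ, vecEnorm (v₁ k) ≤ a₁ * Real.sqrt N ∧ vecEnorm (v₂ k) ≤ a₂ * Real.sqrt N := by
  have hu₁norm : ∀ k, vecEnorm (u₁ k) ≤ a₁ * Real.sqrt N := fun k =>
    vecEnorm_le_of_le ha₁.le fun i =>
      sq_le_sq' (by linarith [(hu₁ k i).1, (hu₁ k i).2]) (hu₁ k i).2
  have hu₂norm : ∀ k, vecEnorm (u₂ k) ≤ a₂ * Real.sqrt N := fun k =>
    vecEnorm_le_of_le ha₂.le fun i =>
      sq_le_sq' (by linarith [(hu₂ k i).1, (hu₂ k i).2]) (hu₂ k i).2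
  intro k
  induction k with
  | zero => exact ⟨hinit₁.trans (hu₁norm 0), hinit₂.trans (hu₂norm 0)⟩
  | succ k ih =>
    have hγk : 0 < γ k := lt_of_lt_of_le hLU.1 (hγ k).1
    constructor
    · refine step_bound μ₁ (γ k) (a₁ * Real.sqrt N) hμ₁ hγk (by positivity)
        (W₁ (k + 1) *ᵥ u₁ (k + 1)) (v₁ k) (v₁ (k + 1)) (fun j => ?_) ?_ ih.1
      · rcases hthresh k j with ⟨h, _⟩ | ⟨h, _⟩
        · exact Or.inl h
        · exact Or.inr h
      · rw [vecEnorm_mulVec _ (hW₁ (k + 1))]; exact hu₁norm (k + 1)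
    · refine step_bound μ₂ (γ k) (a₂ * Real.sqrt N) hμ₂ hγk (by positivity)
        (W₂ (k + 1) *ᵥ u₂ (k + 1)) (v₂ k) (v₂ (k + 1)) (fun j => ?_) ?_ ih.2
      · rcases hthresh k j with ⟨_, h⟩ | ⟨_, h⟩
        · exact Or.inl h
        · exact Or.inr h
      · rw [vecEnorm_mulVec _ (hW₂ (k + 1))]; exact hu₂norm (k + 1)
end

section
/- The Poisson negative log-likelihood Φ₁(u) = ⟨1, Au + c⟩ − ⟨f, ln(Au + c)⟩ is strictly convex and coercive on the nonnegative orthant whenever f > 0 entrywise, c > 0 entrywise, A has nonnegative entries, A1 > 0, and A^T 1 > 0, and A is injective. -/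
open Matrix

private lemma log_combo_le {x y a b : ℝ} (hx : 0 < x) (hy : 0 < y)
    (ha : 0 ≤ a) (hb : 0 ≤ b) (hab : a + b = 1) :
    a * Real.log x + b * Real.log y ≤ Real.log (a * x + b * y) := by
  have := strictConcaveOn_log_Ioi.concaveOn.2 (Set.mem_Ioi.2 hx) (Set.mem_Ioi.2 hy) ha hb hab
  simpa [smul_eq_mul] using this

private lemma log_combo_lt {x y a b : ℝ} (hx : 0 < x) (hy : 0 < y) (hxy : x ≠ y)
    (ha : 0 < a) (hb : 0 < b) (hab : a + b = 1) :
    a * Real.log x + b * Real.log y < Real.log (a * x + b * y) := by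
  have := strictConcaveOn_log_Ioi.2 (Set.mem_Ioi.2 hx) (Set.mem_Ioi.2 hy) hxy ha hb hab
  simpa [smul_eq_mul] using this

private lemma poisson_term_le {φ x y a b : ℝ} (hφ : 0 < φ) (hx : 0 < x) (hy : 0 < y)
    (ha : 0 ≤ a) (hb : 0 ≤ b) (hab : a + b = 1) :
    (a * x + b * y) - φ * Real.log (a * x + b * y) ≤
      a * (x - φ * Real.log x) + b * (y - φ * Real.log y) := by
  have h := log_combo_le hx hy ha hb hab
  nlinarith [mul_le_mul_of_nonneg_left h hφ.le]

private lemma poisson_term_lt {φ x y a b : ℝ} (hφ : 0 < φ) (hx : 0 < x) (hy : 0 < y)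
    (hxy : x ≠ y) (ha : 0 < a) (hb : 0 < b) (hab : a + b = 1) :
    (a * x + b * y) - φ * Real.log (a * x + b * y) <
      a * (x - φ * Real.log x) + b * (y - φ * Real.log y) := by
  have h := log_combo_lt hx hy hxy ha hb hab
  nlinarith [mul_lt_mul_of_pos_left h hφ]

/-- The Poisson negative log-likelihood
Φ₁(u) = ⟨1, Au + c⟩ − ⟨f, ln(Au + c)⟩ is strictly convex and coercive on the nonnegative
orthant, given f > 0, c > 0, A entrywise nonnegative with positive row and column sums,
and A injective. -/
theorem poisson_loglik_strictconvex_coercive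
    {M N : ℕ} (A : Matrix (Fin M) (Fin N) ℝ) (c f : Fin M → ℝ)
    (hA : ∀ i j, 0 ≤ A i j)
    (hrow : ∀ i, 0 < ∑ j, A i j) (hcol : ∀ j, 0 < ∑ i, A i j)
    (hc : ∀ i, 0 < c i) (hf : ∀ i, 0 < f i)
    (hinj : Function.Injective fun u : Fin N → ℝ => A *ᵥ u) :
    let Φ : (Fin N → ℝ) → ℝ := fun u =>
      (∑ i, ((A *ᵥ u) i + c i)) - ∑ i, f i * Real.log ((A *ᵥ u) i + c i)
    StrictConvexOn ℝ {u : Fin N → ℝ | ∀ i, 0 ≤ u i} Φ ∧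
      ∀ C : ℝ, ∃ R : ℝ, ∀ u : Fin N → ℝ, (∀ i, 0 ≤ u i) →
        R ≤ Real.sqrt (∑ i, (u i) ^ 2) → C ≤ Φ u := by
  intro Φ
  have hΦdef : ∀ u : Fin N → ℝ,
      Φ u = (∑ i, ((A *ᵥ u) i + c i)) - ∑ i, f i * Real.log ((A *ᵥ u) i + c i) :=
    fun u => rfl
  have hΦsum : ∀ u : Fin N → ℝ,
      Φ u = ∑ i, (((A *ᵥ u) i + c i) - f i * Real.log ((A *ᵥ u) i + c i)) := by
    intro u
    rw [hΦdef u, Finset.sum_sub_distrib]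
  have hpos : ∀ u : Fin N → ℝ, (∀ i, 0 ≤ u i) → ∀ i, 0 < (A *ᵥ u) i + c i := by
    intro u hu i
    have h0 : 0 ≤ (A *ᵥ u) i := by
      simp only [mulVec, dotProduct]
      exact Finset.sum_nonneg fun j _ => mul_nonneg (hA i j) (hu j)
    linarith [hc i]
  constructor
  · constructor
    · intro u hu v hv a b ha hb hab
      intro i
      simp only [Pi.add_apply, Pi.smul_apply, smul_eq_mul]
      exact add_nonneg (mul_nonneg ha (hu i)) (mul_nonneg hb (hv i))
    · intro u hu v hv huv a b ha hb hab
      have hx := hpos u hu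
      have hy := hpos v hv
      have hAw : ∀ i, (A *ᵥ (a • u + b • v)) i + c i
          = a * ((A *ᵥ u) i + c i) + b * ((A *ᵥ v) i + c i) := by
        intro i
        have h1 : A *ᵥ (a • u + b • v) = a • (A *ᵥ u) + b • (A *ᵥ v) := by
          rw [mulVec_add, mulVec_smul, mulVec_smul]
        rw [h1]
        simp only [Pi.add_apply, Pi.smul_apply, smul_eq_mul]
        linear_combination (c i) * hab.symm
      have hne : A *ᵥ u ≠ A *ᵥ v := fun h => huv (hinj h)
      obtain ⟨i0, hi0⟩ := Function.ne_iff.1 hne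
      have hstrict : ((A *ᵥ u) i0 + c i0) ≠ ((A *ᵥ v) i0 + c i0) := by
        intro h; exact hi0 (by linarith)
      simp only [smul_eq_mul]
      rw [hΦsum, hΦsum, hΦsum, Finset.mul_sum, Finset.mul_sum, ← Finset.sum_add_distrib]
      refine Finset.sum_lt_sum (fun i _ => ?_) ⟨i0, Finset.mem_univ i0, ?_⟩
      · rw [hAw i]
        exact poisson_term_le (hf i) (hx i) (hy i) ha.le hb.le hab
      · rw [hAw i0]
        exact poisson_term_lt (hf i0) (hx i0) (hy i0) hstrict ha hb hab
  · intro C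
    rcases Nat.eq_zero_or_pos N with hN | hN
    · refine ⟨1, fun u hu hR => ?_⟩
      have h0 : ∑ j, (u j) ^ 2 = 0 :=
        Finset.sum_eq_zero fun j _ => absurd j.isLt (by omega)
      rw [h0, Real.sqrt_zero] at hR
      linarith
    · have hne : (Finset.univ : Finset (Fin N)).Nonempty := ⟨⟨0, hN⟩, Finset.mem_univ _⟩
      set κ := Finset.univ.inf' hne (fun j => ∑ i, A i j) with hκdef
      have hκpos : 0 < κ := (Finset.lt_inf'_iff hne).2 fun j _ => hcol j
      set K := ∑ i, f i * (Real.log (2 * f i) - 1) with hKdef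
      refine ⟨2 * (C + K) / κ, fun u hu hR => ?_⟩
      have hsp := hpos u hu
      -- per-term log bound
      have hterm : ∀ i, f i * Real.log ((A *ᵥ u) i + c i)
          ≤ ((A *ᵥ u) i + c i) / 2 + f i * (Real.log (2 * f i) - 1) := by
        intro i
        set s := (A *ᵥ u) i + c i with hs_def
        have hs : 0 < s := hsp i
        have hfi := hf i
        have h1 : Real.log (s / (2 * f i)) ≤ s / (2 * f i) - 1 :=
          Real.log_le_sub_one_of_pos (by positivity)
        have h2 : Real.log (s / (2 * f i)) = Real.log s - Real.log (2 * f i) :=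
          Real.log_div hs.ne' (by positivity)
        rw [h2] at h1
        have h3 := mul_le_mul_of_nonneg_left h1 hfi.le
        have hs2 : f i * (s / (2 * f i) - 1) = s / 2 - f i := by
          field_simp
        nlinarith
      have hΦge : (∑ i, ((A *ᵥ u) i + c i)) / 2 - K ≤ Φ u := by
        rw [hΦdef u]
        have h4 : ∑ i, f i * Real.log ((A *ᵥ u) i + c i)
            ≤ ∑ i, (((A *ᵥ u) i + c i) / 2 + f i * (Real.log (2 * f i) - 1)) :=
          Finset.sum_le_sum (fun i _ => hterm i)
        rw [Finset.sum_add_distrib, ← hKdef, ← Finset.sum_div] at h4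
        linarith
      have hsum : κ * ∑ j, u j ≤ ∑ i, ((A *ᵥ u) i + c i) := by
        have h1 : ∑ i, (A *ᵥ u) i = ∑ j, (∑ i, A i j) * u j := by
          simp only [mulVec, dotProduct]
          rw [Finset.sum_comm]
          simp [Finset.sum_mul]
        calc κ * ∑ j, u j = ∑ j, κ * u j := Finset.mul_sum _ _ _
          _ ≤ ∑ j, (∑ i, A i j) * u j :=
            Finset.sum_le_sum fun j _ =>
              mul_le_mul_of_nonneg_right (Finset.inf'_le _ (Finset.mem_univ j)) (hu j)
          _ = ∑ i, (A *ᵥ u) i := h1.symm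
          _ ≤ ∑ i, ((A *ᵥ u) i + c i) :=
            Finset.sum_le_sum fun i _ => by linarith [hc i]
      have hsqrt : Real.sqrt (∑ j, (u j) ^ 2) ≤ ∑ j, u j := by
        have hsn : 0 ≤ ∑ j, u j := Finset.sum_nonneg fun j _ => hu j
        rw [show (∑ j, u j) = Real.sqrt ((∑ j, u j) ^ 2) from (Real.sqrt_sq hsn).symm]
        exact Real.sqrt_le_sqrt
          (Finset.sum_sq_le_sq_sum_of_nonneg fun j _ => hu j)
      have h5 : 2 * (C + K) ≤ κ * ∑ j, u j := by
        have h6 := (div_le_iff₀ hκpos).1 (hR.trans hsqrt)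
        linarith
      have h7 : 2 * (C + K) ≤ ∑ i, ((A *ᵥ u) i + c i) := h5.trans hsum
      have h8 : C ≤ (∑ i, ((A *ᵥ u) i + c i)) / 2 - K := by linarith
      exact h8.trans hΦge
end
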